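/- Let D be a bipartite tournament and M a positive integer. If C^M(D) has at least one edge, then C^m(D) has at least one edge for every positive integer m <= M. -/

import Mathlib

/-- `walkN D n u v` : there is a directed walk of length `n` from `u` to `v` in the digraph `D`. -/
def walkN {V : Type*} (D : V → V → Prop) : ℕ → V → V → Prop
  | 0 => fun u v => u = v
  | n+1 => fun u v => ∃ w, D u w ∧ walkN D n w v

/-- The `m`-step competition graph of the digraph `D`. -/
def cmGraph {V : Type*} (D : V → V → Prop) (m : ℕ) : SimpleGraph V where
  Adj u v := u ≠ v ∧ ∃ z, walkN D m u z ∧ walkN D m v z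
  symm := by
    constructor
    intro u v h
    exact ⟨Ne.symm h.1, h.2.imp fun z hz => ⟨hz.2, hz.1⟩⟩
  loopless := by constructor; intro v h; exact h.1 rfl

/-- Sinks of the subdigraph of `D` induced by `S`. -/
def sinks {V : Type*} (D : V → V → Prop) (S : Set V) : Set V :=
  {v ∈ S | ∀ w ∈ S, ¬ D v w}

/-- The digraph sequence `D_0, D_1, …` (as vertex sets) associated with the sink sequence. -/
def Dseq {V : Type*} (D : V → V → Prop) : ℕ → Set V
  | 0 => Set.univ
  | n+1 => Dseq D n \ sinks D (Dseq D n)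

/-- The sink sequence `W_0, W_1, …` of `D`. -/
def Wseq {V : Type*} (D : V → V → Prop) (n : ℕ) : Set V := sinks D (Dseq D n)

/-- `k` is the sink elimination index `ζ(D)`. -/
def IsSinkElimIndex {V : Type*} (D : V → V → Prop) (k : ℕ) : Prop :=
  (Wseq D k = Dseq D k ∨ Wseq D k = ∅) ∧
  ∀ j < k, Wseq D j ≠ Dseq D j ∧ Wseq D j ≠ ∅

/-- A digraph is acyclic iff it has no directed closed walk of positive length. -/
def DigraphAcyclic {V : Type*} (D : V → V → Prop) : Prop :=
  ∀ v : V, ∀ n : ℕ, 0 < n → ¬ walkN D n v v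

/-- `D` is a bipartite tournament with bipartition `(V1, V2)`. -/
structure IsBipartiteTournament {V : Type*} (D : V → V → Prop) (V1 V2 : Set V) : Prop where
  nonempty1 : V1.Nonempty
  nonempty2 : V2.Nonempty
  union_eq : V1 ∪ V2 = Set.univ
  disj : V1 ∩ V2 = ∅
  oriented : ∀ x ∈ V1, ∀ y ∈ V2, Xor' (D x y) (D y x)
  no_intra : ∀ x y, D x y → (x ∈ V1 ∧ y ∈ V2) ∨ (x ∈ V2 ∧ y ∈ V1)

/-- The competition graph sequence of `D` is eventually equal, starting from `q`. -/
def PeriodicFrom {V : Type*} (D : V → V → Prop) (q : ℕ) : Prop :=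
  ∃ r, 0 < r ∧ ∀ i : ℕ, cmGraph D (q + i) = cmGraph D (q + r + i)

/-- `q` is the competition index of `D`. -/
def IsCindex {V : Type*} (D : V → V → Prop) (q : ℕ) : Prop :=
  0 < q ∧ PeriodicFrom D q ∧ ∀ q', 0 < q' → PeriodicFrom D q' → q ≤ q'

/-- `p` is the competition period of `D`, given that `q` is its competition index. -/
def IsCperiod {V : Type*} (D : V → V → Prop) (q p : ℕ) : Prop :=
  0 < p ∧ cmGraph D q = cmGraph D (q + p) ∧
    ∀ p', 0 < p' → cmGraph D q = cmGraph D (q + p') → p ≤ p'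

lemma walkN_snoc {V : Type*} {D : V → V → Prop} :
    ∀ {n : ℕ} {u v : V}, walkN D (n+1) u v → ∃ w, walkN D n u w ∧ D w v := by
  intro n
  induction n with
  | zero =>
    intro u v h
    obtain ⟨w, huw, hwv⟩ := h
    exact ⟨u, rfl, hwv ▸ huw⟩
  | succ k ih =>
    intro u v h
    obtain ⟨w, huw, hwv⟩ := h
    obtain ⟨y, hy, hyv⟩ := ih hwv
    exact ⟨y, ⟨w, huw, hy⟩, hyv⟩

lemma edge_step {V : Type*} (D : V → V → Prop) (m : ℕ) (hm : 0 < m)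
    (h : ∃ u v : V, (cmGraph D (m+1)).Adj u v) :
    ∃ u v : V, (cmGraph D m).Adj u v := by
  obtain ⟨u, v, hne, z, ⟨u1, hu1, hu1z⟩, ⟨v1, hv1, hv1z⟩⟩ := h
  by_cases huv : u1 = v1
  · subst huv
    obtain ⟨k, rfl⟩ := Nat.exists_eq_add_of_lt hm
    simp only [Nat.zero_add] at *
    obtain ⟨y, hy, _⟩ := walkN_snoc hu1z
    exact ⟨u, v, hne, y, ⟨u1, hu1, hy⟩, ⟨u1, hv1, hy⟩⟩
  · exact ⟨u1, v1, huv, z, hu1z, hv1z⟩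

/-- If `C^M(D)` of a bipartite tournament has an edge, then so does `C^m(D)`
for every positive integer `m ≤ M`. -/
theorem edge_exists_downward {V : Type*} [Fintype V] (D : V → V → Prop)
    (V1 V2 : Set V) (hD : IsBipartiteTournament D V1 V2)
    (M : ℕ) (hM : 0 < M) (hedge : ∃ u v : V, (cmGraph D M).Adj u v) :
    ∀ m : ℕ, 0 < m → m ≤ M → ∃ u v : V, (cmGraph D m).Adj u v := by
  intro m hm hmM
  have aux : ∀ j : ℕ, (∃ u v : V, (cmGraph D (m + j)).Adj u v) →
      ∃ u v : V, (cmGraph D m).Adj u v := by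
    intro j
    induction j with
    | zero => simpa using id
    | succ k ih =>
      intro h
      exact ih (edge_step D (m + k) (Nat.lt_of_lt_of_le hm (Nat.le_add_right m k)) h)
  exact aux (M - m) (by rwa [Nat.add_sub_cancel' hmM])
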